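/- If S ⊆ (0,∞) has at least two points and divides a nonempty proper closed subset T of (0,∞), then (s'/s)·T ⊆ T and (s/s')·T ⊆ T for all s, s' ∈ S; in particular, (s'/s)ᵏ·t ∈ T for all t ∈ T, s, s' ∈ S, and k ∈ ℤ. -/

import Mathlib

open Set

/-- `S` (multiplicatively) links `T₁` and `T₂`: some dilate `c • S` (with `c > 0`)
meets both `T₁` and `T₂`. -/
def Links (S T₁ T₂ : Set ℝ) : Prop :=
  ∃ c > (0 : ℝ), ((fun t => c * t) '' S ∩ T₁).Nonempty ∧ ((fun t => c * t) '' S ∩ T₂).Nonempty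

/-- If `S ⊆ (0,∞)` has at least two points and divides a nonempty proper subset
`T ⊆ (0,∞)` closed in `(0,∞)`, then `(s'/s)·T ⊆ T` and `(s/s')·T ⊆ T` for all
`s, s' ∈ S`; in particular `(s'/s)^k · t ∈ T` for all `t ∈ T`, `s, s' ∈ S`, `k ∈ ℤ`. -/
theorem stmt11 (S T : Set ℝ) (hS : S ⊆ Set.Ioi 0) (hT : T ⊆ Set.Ioi 0)
    (hS2 : ∃ s ∈ S, ∃ s' ∈ S, s ≠ s')
    (hTne : T.Nonempty) (hTproper : T ≠ Set.Ioi 0)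
    (hTclosed : closure T ∩ Set.Ioi 0 ⊆ T)
    (hdiv : ¬ Links S T (Set.Ioi 0 \ T)) :
    (∀ s ∈ S, ∀ s' ∈ S, (fun t => (s' / s) * t) '' T ⊆ T) ∧
    (∀ s ∈ S, ∀ s' ∈ S, (fun t => (s / s') * t) '' T ⊆ T) ∧
    (∀ t ∈ T, ∀ s ∈ S, ∀ s' ∈ S, ∀ k : ℤ, (s' / s) ^ k * t ∈ T) := by
  have key : ∀ s ∈ S, ∀ s' ∈ S, ∀ t ∈ T, (s' / s) * t ∈ T := by
    intro s hs s' hs' t ht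
    have hspos : (0:ℝ) < s := hS hs
    have hs'pos : (0:ℝ) < s' := hS hs'
    have htpos : (0:ℝ) < t := hT ht
    set c := t / s with hc
    have hcpos : 0 < c := div_pos htpos hspos
    have hcs : c * s = t := div_mul_cancel₀ t hspos.ne'
    by_contra hmem
    apply hdiv
    refine ⟨c, hcpos, ⟨t, ⟨s, hs, hcs⟩, ht⟩, ⟨c * s', ⟨s', hs', rfl⟩, ?_, ?_⟩⟩
    · exact mul_pos hcpos hs'pos
    · have : c * s' = (s' / s) * t := by rw [hc]; ring
      rw [this]; exact hmem
  have key2 : ∀ s ∈ S, ∀ s' ∈ S, ∀ t ∈ T, ∀ k : ℤ, (s' / s) ^ k * t ∈ T := by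
    intro s hs s' hs' t ht k
    have hspos : (0:ℝ) < s := hS hs
    have hs'pos : (0:ℝ) < s' := hS hs'
    induction k using Int.induction_on with
    | zero => simpa using ht
    | succ n ih =>
        have : (s' / s) ^ ((n : ℤ) + 1) * t = (s' / s) * ((s' / s) ^ (n : ℤ) * t) := by
          rw [zpow_add_one₀ (by positivity)]; ring
        rw [this]; exact key s hs s' hs' _ ih
    | pred n ih =>
        have : (s' / s) ^ (-(n : ℤ) - 1) * t = (s / s') * ((s' / s) ^ (-(n : ℤ)) * t) := by
          rw [zpow_sub_one₀ (by positivity)]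
          rw [show ((s' / s) : ℝ)⁻¹ = s / s' by rw [inv_div]]
          ring
        rw [this]; exact key s' hs' s hs _ ih
  refine ⟨?_, ?_, ?_⟩
  · rintro s hs s' hs' x ⟨t, ht, rfl⟩
    exact key s hs s' hs' t ht
  · rintro s hs s' hs' x ⟨t, ht, rfl⟩
    exact key s' hs' s hs t ht
  · intro t ht s hs s' hs' k
    exact key2 s hs s' hs' t ht k
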